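/- arXiv:2309.14215 — 5 statements merged into one kernel-verified Lean document; each statement's English description precedes it below -/
import Mathlib

section
/- Let E : [0,∞) → ℝ be nonnegative, nonincreasing and differentiable, and let D : [0,∞) → ℝ be nonnegative and continuous. Assume the energy–dissipation relation E'(t) ≤ −D(t) for every t ≥ 0. Then for every ε > 0 there exists a time T_g with 0 ≤ T_g ≤ (2/(3·√ε))·E(0)^{3/2} such that E(T_g)·D(T_g)² ≤ ε. -/
open MeasureTheory Set

/-- Lemma 1.8: along any evolution with `E' ≤ -D`, the dimensionless quantity
`E·D²` drops below any `ε` within a time of order `E(0)^{3/2}`. -/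
theorem stmt0 (E D : ℝ → ℝ)
    (hE_nonneg : ∀ t, 0 ≤ t → 0 ≤ E t)
    (hE_mono : AntitoneOn E (Set.Ici (0:ℝ)))
    (hE_diff : ∀ t, 0 ≤ t → DifferentiableAt ℝ E t)
    (hD_nonneg : ∀ t, 0 ≤ t → 0 ≤ D t)
    (hD_cont : Continuous D)
    (hED : ∀ t, 0 ≤ t → deriv E t ≤ - D t) :
    ∀ ε : ℝ, 0 < ε → ∃ T : ℝ, 0 ≤ T ∧
      T ≤ 2 / (3 * Real.sqrt ε) * (E 0) ^ ((3:ℝ)/2) ∧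
      E T * (D T) ^ 2 ≤ ε := by
  intro ε hε
  set T₀ : ℝ := 2 / (3 * Real.sqrt ε) * (E 0) ^ ((3:ℝ)/2) with hT₀def
  have hsε : 0 < Real.sqrt ε := Real.sqrt_pos.mpr hε
  have hT₀nonneg : 0 ≤ T₀ := by
    apply mul_nonneg
    · positivity
    · exact Real.rpow_nonneg (hE_nonneg 0 le_rfl) _
  by_cases h : ∃ T ∈ Set.Icc (0:ℝ) T₀, E T * (D T) ^ 2 ≤ ε
  · obtain ⟨T, hT, hTle⟩ := h
    exact ⟨T, hT.1, hT.2, hTle⟩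
  push_neg at h
  exfalso
  -- On [0, T₀], E·D² > ε, so E > 0 and √E·D ≥ √ε
  have hpos : ∀ t ∈ Set.Icc (0:ℝ) T₀, 0 < E t := by
    intro t ht
    rcases lt_or_eq_of_le (hE_nonneg t ht.1) with h' | h'
    · exact h'
    · exfalso
      have := h t ht
      rw [← h'] at this
      nlinarith
  have hsqrtD : ∀ t ∈ Set.Icc (0:ℝ) T₀, Real.sqrt ε ≤ Real.sqrt (E t) * D t := by
    intro t ht
    have h1 : ε ≤ E t * (D t) ^ 2 := (h t ht).le
    have h2 : Real.sqrt (E t) * Real.sqrt (E t) = E t :=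
      Real.mul_self_sqrt (hE_nonneg t ht.1)
    have h3 : 0 ≤ Real.sqrt (E t) * D t :=
      mul_nonneg (Real.sqrt_nonneg _) (hD_nonneg t ht.1)
    nlinarith [Real.sq_sqrt hε.le, Real.sqrt_nonneg ε, sq_nonneg (Real.sqrt (E t) * D t - Real.sqrt ε)]
  have hE0pos : 0 < E 0 := hpos 0 ⟨le_rfl, hT₀nonneg⟩
  have hT₀pos : 0 < T₀ := by
    apply mul_pos
    · positivity
    · exact Real.rpow_pos_of_pos hE0pos _
  -- the auxiliary function g
  set g : ℝ → ℝ := fun t => E t * Real.sqrt (E t) + (3/2) * Real.sqrt ε * t with hgdef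
  -- g has derivative (3/2)√(E t)·E'(t) + (3/2)√ε at interior points
  have hg_deriv : ∀ t ∈ Set.Ioo (0:ℝ) T₀,
      HasDerivAt g ((3/2) * Real.sqrt (E t) * deriv E t + (3/2) * Real.sqrt ε) t := by
    intro t ht
    have htIcc : t ∈ Set.Icc (0:ℝ) T₀ := ⟨ht.1.le, ht.2.le⟩
    have hEt : 0 < E t := hpos t htIcc
    have hEd : HasDerivAt E (deriv E t) t := (hE_diff t ht.1.le).hasDerivAt
    have hsq : HasDerivAt (fun t => Real.sqrt (E t))
        ((1 / (2 * Real.sqrt (E t))) * deriv E t) t :=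
      (Real.hasDerivAt_sqrt hEt.ne').comp t hEd
    have hlin : HasDerivAt (fun t : ℝ => (3/2) * Real.sqrt ε * t)
        ((3/2) * Real.sqrt ε) t := by
      simpa using (hasDerivAt_id t).const_mul ((3/2) * Real.sqrt ε)
    have := (hEd.mul hsq).add hlin
    refine this.congr_deriv ?_
    have hs : Real.sqrt (E t) ≠ 0 := (Real.sqrt_pos.mpr hEt).ne'
    have h2 : Real.sqrt (E t) * Real.sqrt (E t) = E t := Real.mul_self_sqrt hEt.le
    have h3 : E t * (1 / (2 * Real.sqrt (E t)) * deriv E t)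
        = (E t / Real.sqrt (E t)) * deriv E t / 2 := by ring
    rw [h3, Real.div_sqrt]
    ring
  -- g is antitone on [0,T₀]
  have hg_cont : ContinuousOn g (Set.Icc (0:ℝ) T₀) := by
    apply ContinuousOn.add
    · intro t ht
      have hc : ContinuousAt E t := (hE_diff t ht.1).continuousAt
      exact ((hc.mul (Real.continuous_sqrt.continuousAt.comp hc))).continuousWithinAt
    · exact (continuous_const.mul continuous_id).continuousOn
  have hg_anti : AntitoneOn g (Set.Icc (0:ℝ) T₀) := by
    apply antitoneOn_of_deriv_nonpos (convex_Icc _ _) hg_cont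
    · intro t ht
      rw [interior_Icc] at ht
      exact (hg_deriv t ht).differentiableAt.differentiableWithinAt
    · intro t ht
      rw [interior_Icc] at ht
      rw [(hg_deriv t ht).deriv]
      have htIcc : t ∈ Set.Icc (0:ℝ) T₀ := ⟨ht.1.le, ht.2.le⟩
      have h1 : deriv E t ≤ - D t := hED t ht.1.le
      have h2 : Real.sqrt ε ≤ Real.sqrt (E t) * D t := hsqrtD t htIcc
      have h3 : 0 ≤ Real.sqrt (E t) := Real.sqrt_nonneg _
      nlinarith
  have hgle : g T₀ ≤ g 0 := hg_anti ⟨le_rfl, hT₀nonneg⟩ ⟨hT₀nonneg, le_rfl⟩ hT₀nonneg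
  -- but (3/2)√ε·T₀ = E0^{3/2} = E0·√E0
  have hrpow : (E 0) ^ ((3:ℝ)/2) = E 0 * Real.sqrt (E 0) := by
    rw [show (3:ℝ)/2 = 1 + 1/2 by norm_num, Real.rpow_add hE0pos, Real.rpow_one,
      ← Real.sqrt_eq_rpow]
  have hkey : (3/2) * Real.sqrt ε * T₀ = E 0 * Real.sqrt (E 0) := by
    rw [hT₀def, hrpow]
    field_simp
  have hET₀ : 0 < E T₀ := hpos T₀ ⟨hT₀nonneg, le_rfl⟩
  have : 0 < E T₀ * Real.sqrt (E T₀) :=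
    mul_pos hET₀ (Real.sqrt_pos.mpr hET₀)
  simp only [hgdef, mul_zero, add_zero] at hgle
  nlinarith [hgle, hkey]
end

section
/- Let d ∈ {1,2} and C > 0. There exists ε₁ > 0, depending only on d and C, with the following property. Let T > 0 and let E, D : [0,T] → [0,∞) be differentiable functions satisfying E'(t) ≤ −D(t) and D'(t) ≤ C·D(t)^{(6−d)/(3−d)} for every t ∈ [0,T]. Then at every time t ∈ [0,T] at which E(t)^{3−d}·D(t)^{d} ≤ ε₁, the derivative of the function s ↦ E(s)^{3−d}·D(s)^{d} at s = t is nonpositive. -/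
open MeasureTheory Set

/-- Lemma 5.8: smallness of the dimensionless quantity `E^{3-d}·D^d` is preserved
under `E' ≤ -D` and `D' ≤ C·D^{(6-d)/(3-d)}` for `d ∈ {1,2}`. -/
theorem stmt2 (d : ℕ) (hd : d = 1 ∨ d = 2) (C : ℝ) (hC : 0 < C) :
    ∃ ε₁ : ℝ, 0 < ε₁ ∧ ∀ (T : ℝ) (E D : ℝ → ℝ), 0 < T →
      (∀ t ∈ Set.Icc (0:ℝ) T, 0 ≤ E t) →
      (∀ t ∈ Set.Icc (0:ℝ) T, 0 ≤ D t) →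
      (∀ t ∈ Set.Icc (0:ℝ) T, DifferentiableAt ℝ E t) →
      (∀ t ∈ Set.Icc (0:ℝ) T, DifferentiableAt ℝ D t) →
      (∀ t ∈ Set.Icc (0:ℝ) T, deriv E t ≤ - D t) →
      (∀ t ∈ Set.Icc (0:ℝ) T,
        deriv D t ≤ C * D t ^ ((6 - (d:ℝ))/(3 - (d:ℝ)))) →
      ∀ t ∈ Set.Icc (0:ℝ) T, E t ^ (3 - d) * D t ^ d ≤ ε₁ →
        deriv (fun s => E s ^ (3 - d) * D s ^ d) t ≤ 0 := by
  refine ⟨min (4 / C ^ 2) (1 / (2 * C)), by positivity, ?_⟩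
  intro T E D hT hE0 hD0 hEdiff hDdiff hE' hD' t ht hsmall
  have hx := hE0 t ht
  have hy := hD0 t ht
  have hEd := (hEdiff t ht).hasDerivAt
  have hDd := (hDdiff t ht).hasDerivAt
  have hE'le := hE' t ht
  have hD'le := hD' t ht
  set x := E t with hxdef
  set y := D t with hydef
  rcases hd with rfl | rfl
  · -- d = 1
    have hexp : ((6 - ((1:ℕ):ℝ)) / (3 - ((1:ℕ):ℝ))) = (5:ℝ)/2 := by norm_num
    rw [hexp] at hD'le
    have hder : deriv (fun s => E s ^ (3 - 1) * D s ^ 1) t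
        = 2 * x * deriv E t * y + x ^ 2 * deriv D t := by
      have h := (((hEd.pow 2).mul (hDd.pow 1))).deriv
      rw [show (fun s => E s ^ (3 - 1) * D s ^ 1) = E ^ 2 * D from by funext s; simp]
      simpa using h
    rw [hder]
    have hs : (0:ℝ) ≤ Real.sqrt y := Real.sqrt_nonneg y
    have hsy : Real.sqrt y ^ 2 = y := Real.sq_sqrt hy
    have h52 : y ^ ((5:ℝ)/2) = Real.sqrt y ^ 5 := by
      rw [Real.sqrt_eq_rpow, ← Real.rpow_natCast (y ^ ((1:ℝ)/2)) 5, ← Real.rpow_mul hy]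
      norm_num
    rw [h52] at hD'le
    have hsmall' : x ^ 2 * y ≤ 4 / C ^ 2 := le_trans (by simpa using hsmall) (min_le_left _ _)
    have key : x * Real.sqrt y ≤ 2 / C := by
      have h1 : Real.sqrt (x ^ 2 * y) ≤ Real.sqrt (4 / C ^ 2) := Real.sqrt_le_sqrt hsmall'
      rwa [Real.sqrt_mul (sq_nonneg x), Real.sqrt_sq hx,
        show (4 / C ^ 2 : ℝ) = (2 / C) ^ 2 by ring, Real.sqrt_sq (by positivity)] at h1
    -- bound the two terms
    have t1 : 2 * x * deriv E t * y ≤ 2 * x * (-y) * y := by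
      have h := mul_le_mul_of_nonneg_left hE'le (by positivity : (0:ℝ) ≤ 2 * x)
      nlinarith [h]
    have t2 : x ^ 2 * deriv D t ≤ x ^ 2 * (C * Real.sqrt y ^ 5) :=
      mul_le_mul_of_nonneg_left hD'le (sq_nonneg x)
    have key2 : C * (x * Real.sqrt y) ≤ 2 := by
      have h := mul_le_mul_of_nonneg_left key hC.le
      rwa [show C * (2 / C) = 2 by field_simp] at h
    have hs4 : Real.sqrt y ^ 4 = y ^ 2 := by
      rw [show Real.sqrt y ^ 4 = (Real.sqrt y ^ 2) ^ 2 by ring, hsy]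
    have hkey2 : x ^ 2 * (C * Real.sqrt y ^ 5) ≤ 2 * x * y ^ 2 := by
      have h := mul_le_mul_of_nonneg_right key2 (mul_nonneg hx (pow_nonneg hs 4))
      nlinarith [h, hs4]
    nlinarith [t1, t2, hkey2]
  · -- d = 2
    have hexp : ((6 - ((2:ℕ):ℝ)) / (3 - ((2:ℕ):ℝ))) = ((4:ℕ):ℝ) := by norm_num
    rw [hexp, Real.rpow_natCast] at hD'le
    have hder : deriv (fun s => E s ^ (3 - 2) * D s ^ 2) t
        = deriv E t * y ^ 2 + x * (2 * y * deriv D t) := by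
      have h := (((hEd.pow 1).mul (hDd.pow 2))).deriv
      rw [show (fun s => E s ^ (3 - 2) * D s ^ 2) = E * D ^ 2 from by funext s; simp]
      simpa using h
    rw [hder]
    have hsmall' : x * y ^ 2 ≤ 1 / (2 * C) := le_trans (by simpa using hsmall) (min_le_right _ _)
    have t1 : deriv E t * y ^ 2 ≤ (-y) * y ^ 2 :=
      mul_le_mul_of_nonneg_right hE'le (sq_nonneg y)
    have t2 : x * (2 * y * deriv D t) ≤ x * (2 * y * (C * y ^ 4)) := by
      have h := mul_le_mul_of_nonneg_left hD'le (by positivity : (0:ℝ) ≤ 2 * y)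
      exact mul_le_mul_of_nonneg_left h hx
    have h1 : 2 * C * (x * y ^ 2) ≤ 1 := by
      have h := mul_le_mul_of_nonneg_left hsmall' (by positivity : (0:ℝ) ≤ 2 * C)
      rwa [show 2 * C * (1 / (2 * C)) = 1 by field_simp] at h
    have hkey2 : x * (2 * y * (C * y ^ 4)) ≤ y ^ 3 := by
      have h := mul_le_mul_of_nonneg_right h1 (pow_nonneg hy 3)
      nlinarith [h]
    nlinarith [t1, t2, hkey2]
end

section
/- For every C ≥ 1 there exist constants c₁ > 0 and C₂ < ∞, depending only on C, with the following property. Let T > 0 and let E : [0,T] → [0,∞) and D : [0,T] → (0,∞) be differentiable functions satisfying E'(t) ≤ −D(t) and D'(t) ≤ C·D(t)⁴ for all t ∈ [0,T]. Then for every t ∈ [0,T] with t ≥ c₁·E(0)^{3/2} one has D(t) ≤ C₂·E(t/2)/t. -/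
open MeasureTheory Set

private lemma my_mono_aux {f : ℝ → ℝ} {a b : ℝ}
    (hdiff : ∀ x ∈ Set.Icc a b, DifferentiableAt ℝ f x)
    (hder : ∀ x ∈ Set.Ioo a b, 0 ≤ deriv f x) :
    MonotoneOn f (Set.Icc a b) := by
  apply monotoneOn_of_deriv_nonneg (convex_Icc a b)
  · exact fun x hx => (hdiff x hx).continuousAt.continuousWithinAt
  · intro x hx
    rw [interior_Icc] at hx
    exact (hdiff x (Ioo_subset_Icc_self hx)).differentiableWithinAt
  · intro x hx
    rw [interior_Icc] at hx
    exact hder x hx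

private lemma my_anti_aux {f : ℝ → ℝ} {a b : ℝ}
    (hdiff : ∀ x ∈ Set.Icc a b, DifferentiableAt ℝ f x)
    (hder : ∀ x ∈ Set.Ioo a b, deriv f x ≤ 0) :
    AntitoneOn f (Set.Icc a b) := by
  apply antitoneOn_of_deriv_nonpos (convex_Icc a b)
  · exact fun x hx => (hdiff x hx).continuousAt.continuousWithinAt
  · intro x hx
    rw [interior_Icc] at hx
    exact (hdiff x (Ioo_subset_Icc_self hx)).differentiableWithinAt
  · intro x hx
    rw [interior_Icc] at hx
    exact hder x hx

/-- Lemma 5.9 (case d = 2): from `E' ≤ -D` and `D' ≤ C·D⁴` one deduces the decay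
`D(t) ≤ C₂·E(t/2)/t` for all `t ≥ c₁·E(0)^{3/2}`. -/
theorem stmt3 (C : ℝ) (hC : 1 ≤ C) :
    ∃ c₁ C₂ : ℝ, 0 < c₁ ∧ 0 < C₂ ∧ ∀ (T : ℝ) (E D : ℝ → ℝ), 0 < T →
      (∀ t ∈ Set.Icc (0:ℝ) T, 0 ≤ E t) →
      (∀ t ∈ Set.Icc (0:ℝ) T, 0 < D t) →
      (∀ t ∈ Set.Icc (0:ℝ) T, DifferentiableAt ℝ E t) →
      (∀ t ∈ Set.Icc (0:ℝ) T, DifferentiableAt ℝ D t) →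
      (∀ t ∈ Set.Icc (0:ℝ) T, deriv E t ≤ - D t) →
      (∀ t ∈ Set.Icc (0:ℝ) T, deriv D t ≤ C * D t ^ 4) →
      ∀ t ∈ Set.Icc (0:ℝ) T, c₁ * E 0 ^ ((3:ℝ)/2) ≤ t →
        D t ≤ C₂ * E (t / 2) / t := by
  have hC0 : (0:ℝ) < C := lt_of_lt_of_le one_pos hC
  refine ⟨3 * C, 4, by positivity, by norm_num, ?_⟩
  intro T E D hT hE0 hD0 hEdiff hDdiff hE' hD' t ht hct
  -- first: t > 0
  have htpos : 0 < t := by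
    rcases ht.1.lt_or_eq with h | h
    · exact h
    exfalso
    -- t = 0, so E 0 = 0
    have hrpow0 : E 0 ^ ((3:ℝ)/2) = 0 := by
      have h1 : 0 ≤ E 0 ^ ((3:ℝ)/2) :=
        Real.rpow_nonneg (hE0 0 ⟨le_refl 0, hT.le⟩) _
      nlinarith [hct, h.symm ▸ hct]
    have hE00 : E 0 = 0 := by
      rcases (Real.rpow_eq_zero_iff_of_nonneg (hE0 0 ⟨le_refl 0, hT.le⟩)).1 hrpow0 with ⟨h1, _⟩
      exact h1
    -- E is antitone, hence E ≡ 0, contradiction with deriv E < 0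
    have hanti : AntitoneOn E (Set.Icc 0 T) := by
      apply my_anti_aux hEdiff
      intro x hx
      have hx' : x ∈ Set.Icc (0:ℝ) T := Ioo_subset_Icc_self hx
      have := hE' x hx'
      have := hD0 x hx'
      linarith
    have hzero : ∀ s ∈ Set.Icc (0:ℝ) T, E s = 0 := by
      intro s hs
      have h1 : E s ≤ E 0 := hanti ⟨le_refl 0, hT.le⟩ hs hs.1
      have h2 : 0 ≤ E s := hE0 s hs
      linarith
    have hmem : T / 2 ∈ Set.Ioo (0:ℝ) T := ⟨half_pos hT, half_lt_self hT⟩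
    have heq : E =ᶠ[nhds (T/2)] (fun _ => (0:ℝ)) := by
      filter_upwards [Ioo_mem_nhds hmem.1 hmem.2] with s hs
      exact hzero s (Ioo_subset_Icc_self hs)
    have hder0 : deriv E (T/2) = 0 := by
      rw [heq.deriv_eq]; simp
    have := hE' (T/2) (Ioo_subset_Icc_self hmem)
    have := hD0 (T/2) (Ioo_subset_Icc_self hmem)
    linarith
  have hdt : 0 < D t := hD0 t ht
  -- monotone quantity H s = (D s)⁻¹ ^ 3 + 3 C s
  have hH : ∀ s ∈ Set.Icc (0:ℝ) T,
      HasDerivAt (fun x => (D x)⁻¹ ^ 3 + 3 * C * x)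
        ((3:ℕ) * ((D s)⁻¹) ^ 2 * (-(deriv D s) / D s ^ 2) + 3 * C) s := by
    intro s hs
    have hd := (hDdiff s hs).hasDerivAt
    have hne : D s ≠ 0 := (hD0 s hs).ne'
    have h1 := ((hd.inv hne).pow 3)
    have h2 : HasDerivAt (fun x => 3 * C * x) (3 * C) s := by
      simpa using (hasDerivAt_id s).const_mul (3 * C)
    exact h1.add h2
  have hHmono : MonotoneOn (fun x => (D x)⁻¹ ^ 3 + 3 * C * x) (Set.Icc 0 T) := by
    apply my_mono_aux
    · intro x hx; exact (hH x hx).differentiableAt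
    · intro x hx
      have hx' : x ∈ Set.Icc (0:ℝ) T := Ioo_subset_Icc_self hx
      rw [(hH x hx').deriv]
      have hd0 : 0 < D x := hD0 x hx'
      have hdd : deriv D x ≤ C * D x ^ 4 := hD' x hx'
      have hkey : ((3:ℕ) : ℝ) * ((D x)⁻¹) ^ 2 * (-(deriv D x) / D x ^ 2) + 3 * C
          = 3 * (C * D x ^ 4 - deriv D x) / D x ^ 4 := by
        field_simp
        ring
      rw [hkey]
      exact div_nonneg (by linarith) (by positivity)
  -- consequence: for 0 ≤ s ≤ t, (D s)⁻¹ ^ 3 ≤ (D t)⁻¹ ^ 3 + 3 C (t - s)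
  have hHkey : ∀ s ∈ Set.Icc (0:ℝ) t, (D s)⁻¹ ^ 3 ≤ (D t)⁻¹ ^ 3 + 3 * C * (t - s) := by
    intro s hs
    have hs' : s ∈ Set.Icc (0:ℝ) T := ⟨hs.1, le_trans hs.2 ht.2⟩
    have := hHmono hs' ht hs.2
    simp only at this
    linarith
  by_cases hA : 3 * C * t ≤ (D t)⁻¹ ^ 3
  · -- good case: D s ≥ D t / 2 on [t/2, t]
    have hlow : ∀ s ∈ Set.Icc (t/2) t, D t / 2 ≤ D s := by
      intro s hs
      have hs0 : (0:ℝ) ≤ s := le_trans (by linarith) hs.1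
      have hsIcc : s ∈ Set.Icc (0:ℝ) t := ⟨hs0, hs.2⟩
      have h1 := hHkey s hsIcc
      have h2 : (D s)⁻¹ ^ 3 ≤ 8 * (D t)⁻¹ ^ 3 := by
        have : 3 * C * (t - s) ≤ 3 * C * (t / 2) := by
          have := hs.1
          nlinarith
        nlinarith [pow_nonneg (inv_nonneg.2 hdt.le) 3]
      have hds : 0 < D s := hD0 s ⟨hs0, le_trans hs.2 ht.2⟩
      have h3 : (D s)⁻¹ ^ 3 ≤ ((D t / 2)⁻¹) ^ 3 := by
        have : ((D t / 2)⁻¹) ^ 3 = 8 * (D t)⁻¹ ^ 3 := by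
          rw [inv_pow, inv_pow, div_pow]
          rw [inv_div]
          rw [div_eq_mul_inv]
          norm_num
        linarith
      have h4 : (D s)⁻¹ ≤ (D t / 2)⁻¹ :=
        le_of_pow_le_pow_left₀ (by norm_num) (by positivity) h3
      have := (inv_le_inv₀ (by positivity) (by positivity)).1 h4
      linarith [this]
    -- F s = E s + (D t / 2) * s antitone on [t/2, t]
    have hanti : AntitoneOn (fun s => E s + (D t / 2) * s) (Set.Icc (t/2) t) := by
      apply my_anti_aux
      · intro x hx
        have hx' : x ∈ Set.Icc (0:ℝ) T := ⟨le_trans (by linarith) hx.1, le_trans hx.2 ht.2⟩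
        exact ((hEdiff x hx').add ((differentiableAt_id).const_mul _))
      · intro x hx
        have hx' : x ∈ Set.Icc (0:ℝ) T :=
          ⟨le_trans (by linarith) hx.1.le, le_trans hx.2.le ht.2⟩
        have hdiffx : HasDerivAt (fun s => E s + (D t / 2) * s) (deriv E x + D t / 2) x := by
          have h2 : HasDerivAt (fun s : ℝ => (D t / 2) * s) (D t / 2) x := by
            simpa using (hasDerivAt_id x).const_mul (D t / 2)
          exact (hEdiff x hx').hasDerivAt.add h2
        rw [hdiffx.deriv]
        have h1 := hE' x hx'
        have h2 := hlow x (Ioo_subset_Icc_self hx)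
        linarith
    have hmemL : t/2 ∈ Set.Icc (t/2) t := ⟨le_refl _, by linarith⟩
    have hmemR : t ∈ Set.Icc (t/2) t := ⟨by linarith, le_refl _⟩
    have hFF := hanti hmemL hmemR (by linarith)
    simp only at hFF
    have hEt : 0 ≤ E t := hE0 t ht
    -- E t + (D t/2) t ≤ E (t/2) + (D t/2)(t/2)
    have hfin : D t * t ≤ 4 * E (t/2) := by nlinarith
    rw [le_div_iff₀ htpos]
    linarith
  · -- bad case: contradiction
    exfalso
    push_neg at hA
    have h6 : (0:ℝ) < 6 * C * t := by positivity
    set m : ℝ := (6 * C * t) ^ (-(1:ℝ)/3) with hm_def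
    have hm : 0 < m := Real.rpow_pos_of_pos h6 _
    have hm3 : m ^ 3 = (6 * C * t)⁻¹ := by
      rw [hm_def, ← Real.rpow_natCast ((6 * C * t) ^ (-(1:ℝ)/3)) 3, ← Real.rpow_mul h6.le]
      rw [show (-(1:ℝ)/3 * ((3:ℕ):ℝ)) = -1 by norm_num]
      exact Real.rpow_neg_one _
    have hlow : ∀ s ∈ Set.Icc (0:ℝ) t, m ≤ D s := by
      intro s hs
      have hs' : s ∈ Set.Icc (0:ℝ) T := ⟨hs.1, le_trans hs.2 ht.2⟩
      have hds : 0 < D s := hD0 s hs'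
      have h1 := hHkey s hs
      have h2 : (D s)⁻¹ ^ 3 ≤ 6 * C * t := by
        have h3 : 3 * C * (t - s) ≤ 3 * C * t := by nlinarith [hs.1]
        linarith
      have h4 : (D s)⁻¹ ^ 3 ≤ (m⁻¹) ^ 3 := by
        rw [inv_pow m 3, hm3, inv_inv]
        exact h2
      have h5 : (D s)⁻¹ ≤ m⁻¹ :=
        le_of_pow_le_pow_left₀ (by norm_num) (by positivity) h4
      have := (inv_le_inv₀ (by positivity) (by positivity)).1 h5
      linarith
    have hanti : AntitoneOn (fun s => E s + m * s) (Set.Icc 0 t) := by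
      apply my_anti_aux
      · intro x hx
        have hx' : x ∈ Set.Icc (0:ℝ) T := ⟨hx.1, le_trans hx.2 ht.2⟩
        exact ((hEdiff x hx').add ((differentiableAt_id).const_mul _))
      · intro x hx
        have hx' : x ∈ Set.Icc (0:ℝ) T := ⟨hx.1.le, le_trans hx.2.le ht.2⟩
        have hdiffx : HasDerivAt (fun s => E s + m * s) (deriv E x + m) x := by
          have h2 : HasDerivAt (fun s : ℝ => m * s) m x := by
            simpa using (hasDerivAt_id x).const_mul m
          exact (hEdiff x hx').hasDerivAt.add h2
        rw [hdiffx.deriv]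
        have h1 := hE' x hx'
        have h2 := hlow x (Ioo_subset_Icc_self hx)
        linarith
    have hFF := hanti ⟨le_refl 0, htpos.le⟩ ⟨htpos.le, le_refl t⟩ htpos.le
    simp only [mul_zero, add_zero] at hFF
    have hEt : 0 ≤ E t := hE0 t ht
    have hmt : m * t ≤ E 0 := by linarith
    -- so t * (6Ct)^{-1/3} ≤ E 0; cube it
    have hE0pos : 0 < E 0 := lt_of_lt_of_le (by positivity) hmt
    have hcube : (m * t) ^ 3 ≤ E 0 ^ 3 :=
      pow_le_pow_left₀ (by positivity) hmt 3
    have hmt3 : (m * t) ^ 3 = t ^ 3 / (6 * C * t) := by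
      rw [mul_pow, hm3]
      field_simp
    have ht2 : t ^ 2 ≤ 6 * C * E 0 ^ 3 := by
      rw [hmt3] at hcube
      rw [div_le_iff₀ h6] at hcube
      have : t ^ 3 = t ^ 2 * t := by ring
      nlinarith [htpos]
    -- from hct : 3C E0^{3/2} ≤ t, square
    have hsq : (E 0 ^ ((3:ℝ)/2)) ^ 2 = E 0 ^ 3 := by
      rw [← Real.rpow_natCast (E 0 ^ ((3:ℝ)/2)) 2, ← Real.rpow_mul hE0pos.le,
        show ((3:ℝ)/2 * ((2:ℕ):ℝ)) = ((3:ℕ):ℝ) by norm_num, Real.rpow_natCast]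
    have hctsq : 9 * C^2 * E 0 ^ 3 ≤ t ^ 2 := by
      have h1 : (3 * C * E 0 ^ ((3:ℝ)/2)) ^ 2 ≤ t ^ 2 :=
        pow_le_pow_left₀ (by positivity) hct 2
      calc 9 * C^2 * E 0 ^ 3 = (3 * C * E 0 ^ ((3:ℝ)/2)) ^ 2 := by
            rw [mul_pow, mul_pow, hsq]; ring
        _ ≤ t ^ 2 := h1
    nlinarith [pow_pos hE0pos 3, hC0]
end

section
/- Let d ≥ 1 be an integer and let h : ℝ^d → ℝ be a Schwartz function with |∇h(x)| ≤ 1 for every x ∈ ℝ^d. Define the mean curvature of the graph of h by H(x) = (1+|∇h(x)|²)^{−1/2}·( Δh(x) − ⟨∇²h(x)·∇h(x), ∇h(x)⟩/(1+|∇h(x)|²) ), where ∇²h denotes the Hessian. Then ‖∇²h‖_{L²(ℝ^d)} ≤ 2√2·‖H‖_{L²(ℝ^d)}, where the pointwise norm of the Hessian is the Frobenius (Hilbert–Schmidt) norm. -/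
open MeasureTheory Set SchwartzMap

variable {d : ℕ}

noncomputable def Dir (d : ℕ) (i : Fin d) :
    SchwartzMap (EuclideanSpace ℝ (Fin d)) ℝ →L[ℝ] SchwartzMap (EuclideanSpace ℝ (Fin d)) ℝ :=
  LineDeriv.lineDerivOpCLM ℝ _ (EuclideanSpace.single i (1:ℝ))

lemma Dir_apply (i : Fin d) (f : SchwartzMap (EuclideanSpace ℝ (Fin d)) ℝ)
    (x : EuclideanSpace ℝ (Fin d)) :
    Dir d i f x = fderiv ℝ f x (EuclideanSpace.single i (1:ℝ)) :=
  SchwartzMap.lineDerivOp_apply_eq_fderiv (EuclideanSpace.single i (1:ℝ)) f x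

lemma coe_Dir (i : Fin d) (f : SchwartzMap (EuclideanSpace ℝ (Fin d)) ℝ) :
    ⇑(Dir d i f) = fun y => fderiv ℝ f y (EuclideanSpace.single i (1:ℝ)) :=
  funext fun x => SchwartzMap.lineDerivOp_apply_eq_fderiv (EuclideanSpace.single i (1:ℝ)) f x

lemma sch_mul_integrable (f g : SchwartzMap (EuclideanSpace ℝ (Fin d)) ℝ) :
    Integrable (fun x => f x * g x) volume :=
  g.integrable.bdd_mul f.continuous.aestronglyMeasurable
    (.of_forall fun x => f.norm_le_seminorm ℝ x)

lemma sch_sq_integrable (f : SchwartzMap (EuclideanSpace ℝ (Fin d)) ℝ) :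
    Integrable (fun x => (f x) ^ 2) volume := by
  simpa [pow_two] using sch_mul_integrable f f

lemma DirDir_eq (f : SchwartzMap (EuclideanSpace ℝ (Fin d)) ℝ) (i j : Fin d)
    (x : EuclideanSpace ℝ (Fin d)) :
    Dir d j (Dir d i f) x = fderiv ℝ (fderiv ℝ f) x (EuclideanSpace.single j (1:ℝ))
      (EuclideanSpace.single i (1:ℝ)) := by
  have hdiff : DifferentiableAt ℝ (fderiv ℝ (⇑f)) x :=
    (((f.smooth ⊤).fderiv_right (m := (⊤:ℕ∞)) (by simp)).differentiable (by simp)).differentiableAt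
  rw [Dir_apply, coe_Dir]
  rw [fderiv_clm_apply hdiff (differentiableAt_const _)]
  simp

lemma Dir_symm (f : SchwartzMap (EuclideanSpace ℝ (Fin d)) ℝ) (i j : Fin d)
    (x : EuclideanSpace ℝ (Fin d)) :
    Dir d j (Dir d i f) x = Dir d i (Dir d j f) x := by
  rw [DirDir_eq, DirDir_eq]
  exact second_derivative_symmetric (fun y => f.differentiableAt.hasFDerivAt)
    ((((f.smooth ⊤).fderiv_right (m := (⊤:ℕ∞)) (by simp)).differentiable (by simp)).differentiableAt).hasFDerivAt _ _

lemma Dir_comm (f : SchwartzMap (EuclideanSpace ℝ (Fin d)) ℝ) (i j : Fin d) :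
    Dir d j (Dir d i f) = Dir d i (Dir d j f) :=
  SchwartzMap.ext (Dir_symm f i j)

lemma ibp (f g : SchwartzMap (EuclideanSpace ℝ (Fin d)) ℝ) (i : Fin d) :
    ∫ x, f x * (Dir d i g) x = - ∫ x, (Dir d i f) x * g x := by
  have h1 : Integrable (fun x => fderiv ℝ (⇑f) x (EuclideanSpace.single i (1:ℝ)) * g x) volume := by
    simpa [coe_Dir] using sch_mul_integrable (Dir d i f) g
  have h2 : Integrable (fun x => f x * fderiv ℝ (⇑g) x (EuclideanSpace.single i (1:ℝ))) volume := by
    simpa [coe_Dir] using sch_mul_integrable f (Dir d i g)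
  have := integral_mul_fderiv_eq_neg_fderiv_mul_of_integrable (μ := volume)
    h1 h2 (sch_mul_integrable f g) (fun x _ => f.differentiableAt) (fun x _ => g.differentiableAt)
  simpa [coe_Dir] using this

lemma key_int (h : SchwartzMap (EuclideanSpace ℝ (Fin d)) ℝ) (i j : Fin d) :
    ∫ x, (Dir d j (Dir d i h) x) ^ 2
      = ∫ x, (Dir d i (Dir d i h) x) * (Dir d j (Dir d j h) x) := by
  have step1 : ∫ x, (Dir d j (Dir d i h) x) ^ 2
      = ∫ x, (Dir d i (Dir d j h) x) * (Dir d i (Dir d j h) x) := by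
    rw [Dir_comm]; simp_rw [pow_two]
  have step2 : ∫ x, (Dir d i (Dir d j h) x) * (Dir d i (Dir d j h) x)
      = - ∫ x, (Dir d i (Dir d i (Dir d j h)) x) * (Dir d j h) x :=
    ibp (Dir d i (Dir d j h)) (Dir d j h) i
  have step3 : Dir d i (Dir d i (Dir d j h)) = Dir d j (Dir d i (Dir d i h)) := by
    rw [Dir_comm h j i, Dir_comm (Dir d i h) j i]
  have step4 : ∫ x, (Dir d j h) x * (Dir d j (Dir d i (Dir d i h))) x
      = - ∫ x, (Dir d j (Dir d j h)) x * (Dir d i (Dir d i h)) x :=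
    ibp (Dir d j h) (Dir d i (Dir d i h)) j
  rw [step1, step2, step3]
  simp_rw [mul_comm]
  rw [step4, neg_neg]
  exact integral_congr_ae (.of_forall fun x => mul_comm _ _)

lemma sum_int (h : SchwartzMap (EuclideanSpace ℝ (Fin d)) ℝ) :
    ∫ x, ∑ i, ∑ j, (Dir d j (Dir d i h) x)^2
      = ∫ x, (∑ i, Dir d i (Dir d i h) x)^2 := by
  calc ∫ x, ∑ i, ∑ j, (Dir d j (Dir d i h) x)^2
      = ∑ i, ∑ j, ∫ x, (Dir d j (Dir d i h) x)^2 := by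
        rw [integral_finset_sum _ (fun i _ =>
          integrable_finset_sum _ (fun j _ => sch_sq_integrable _))]
        exact Finset.sum_congr rfl fun i _ =>
          integral_finset_sum _ (fun j _ => sch_sq_integrable _)
    _ = ∑ i, ∑ j, ∫ x, (Dir d i (Dir d i h) x) * (Dir d j (Dir d j h) x) :=
        Finset.sum_congr rfl fun i _ => Finset.sum_congr rfl fun j _ => key_int h i j
    _ = ∫ x, ∑ i, ∑ j, (Dir d i (Dir d i h) x) * (Dir d j (Dir d j h) x) := by
        rw [integral_finset_sum _ (fun i _ =>
          integrable_finset_sum _ (fun j _ => sch_mul_integrable _ _))]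
        exact Finset.sum_congr rfl fun i _ =>
          (integral_finset_sum _ (fun j _ => sch_mul_integrable _ _)).symm
    _ = ∫ x, (∑ i, Dir d i (Dir d i h) x)^2 := by
        congr 1; funext x
        rw [pow_two, Finset.sum_mul_sum]

lemma norm_clm_sq (L : EuclideanSpace ℝ (Fin d) →L[ℝ] ℝ) :
    ‖L‖^2 = ∑ i, (L (EuclideanSpace.single i (1:ℝ)))^2 := by
  set v := (InnerProductSpace.toDual ℝ (EuclideanSpace ℝ (Fin d))).symm L with hv
  have hL : ∀ w, L w = inner ℝ v w := fun w =>
    (InnerProductSpace.toDual_symm_apply (𝕜 := ℝ)).symm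
  have hnorm : ‖L‖ = ‖v‖ := by
    rw [hv, LinearIsometryEquiv.norm_map]
  have hsingle : ∀ i, L (EuclideanSpace.single i (1:ℝ)) = v i := by
    intro i
    rw [hL, EuclideanSpace.inner_single_right]
    simp
  simp_rw [hsingle, hnorm]
  rw [EuclideanSpace.norm_eq, Real.sq_sqrt (by positivity)]
  simp [Real.norm_eq_abs, sq_abs]

lemma ptwise_main (q T S F s : ℝ) (hq : q = 1 + s) (hs0 : 0 ≤ s) (hs1 : s ≤ 1)
    (hS : S^2 ≤ F * s^2) (hF : 0 ≤ F) :
    T^2 ≤ 4 * (q ^ (-(1:ℝ)/2) * (T - S/q))^2 + F/2 := by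
  have hq0 : 0 < q := by linarith
  have hrpow : (q ^ (-(1:ℝ)/2))^2 = 1/q := by
    rw [← Real.rpow_natCast (q ^ (-(1:ℝ)/2)) 2, ← Real.rpow_mul hq0.le]
    norm_num [Real.rpow_neg_one]
  rw [mul_pow, hrpow]
  set u := S / q with hu
  have hSu : S = u * q := by rw [hu, div_mul_cancel₀ _ hq0.ne']
  have hu2 : u^2 ≤ F / 4 := by
    have h4 : 4 * s^2 ≤ q^2 := by nlinarith
    rw [hSu] at hS
    nlinarith [mul_pos hq0 hq0, sq_nonneg u, mul_le_mul_of_nonneg_left h4 hF]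
  have hr : (1:ℝ)/2 ≤ 1/q := by
    rw [div_le_div_iff₀ (by norm_num) hq0]; linarith
  nlinarith [sq_nonneg (T - 2*u),
    mul_nonneg (by linarith : (0:ℝ) ≤ 1/q - 1/2) (sq_nonneg (T - u))]

lemma ptwise_H (q T S F s : ℝ) (hq : q = 1 + s) (hs0 : 0 ≤ s) (hs1 : s ≤ 1)
    (hS : S^2 ≤ F * s^2) (hF : 0 ≤ F) :
    (q ^ (-(1:ℝ)/2) * (T - S/q))^2 ≤ 2*T^2 + F/2 := by
  have hq0 : 0 < q := by linarith
  have hrpow : (q ^ (-(1:ℝ)/2))^2 = 1/q := by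
    rw [← Real.rpow_natCast (q ^ (-(1:ℝ)/2)) 2, ← Real.rpow_mul hq0.le]
    norm_num [Real.rpow_neg_one]
  rw [mul_pow, hrpow]
  set u := S / q with hu
  have hSu : S = u * q := by rw [hu, div_mul_cancel₀ _ hq0.ne']
  have hu2 : u^2 ≤ F / 4 := by
    have h4 : 4 * s^2 ≤ q^2 := by nlinarith
    rw [hSu] at hS
    nlinarith [mul_pos hq0 hq0, sq_nonneg u, mul_le_mul_of_nonneg_left h4 hF]
  have hr1 : 1/q ≤ 1 := by
    rw [div_le_one hq0]; linarith
  nlinarith [sq_nonneg (T + u), sq_nonneg (T - u),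
    mul_nonneg (by linarith : (0:ℝ) ≤ 1 - 1/q) (sq_nonneg (T - u))]

/-- The (i,j) entry of the Hessian of `h : ℝ^d → ℝ`. -/
noncomputable def hessEntry (d : ℕ) (h : EuclideanSpace ℝ (Fin d) → ℝ)
    (x : EuclideanSpace ℝ (Fin d)) (i j : Fin d) : ℝ :=
  fderiv ℝ (fun y => fderiv ℝ h y (EuclideanSpace.single i (1:ℝ))) x
    (EuclideanSpace.single j (1:ℝ))

lemma hessEntry_eq (h : SchwartzMap (EuclideanSpace ℝ (Fin d)) ℝ)
    (x : EuclideanSpace ℝ (Fin d)) (i j : Fin d) :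
    hessEntry d (fun y => h y) x i j = Dir d j (Dir d i h) x := by
  rw [Dir_apply, coe_Dir]
  rfl

lemma sqrt_chain {A B : ℝ} (h : A ≤ 8 * B) :
    Real.sqrt A ≤ 2 * Real.sqrt 2 * Real.sqrt B := by
  calc Real.sqrt A ≤ Real.sqrt (8 * B) := Real.sqrt_le_sqrt h
    _ = 2 * Real.sqrt 2 * Real.sqrt B := by
        rw [Real.sqrt_mul (by norm_num : (0:ℝ) ≤ 8),
          show (8:ℝ) = 2^2*2 by norm_num,
          Real.sqrt_mul (by positivity), Real.sqrt_sq (by norm_num)]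

lemma coe_sum (s : Finset (Fin d)) (f : Fin d → SchwartzMap (EuclideanSpace ℝ (Fin d)) ℝ)
    (x : EuclideanSpace ℝ (Fin d)) : (∑ i ∈ s, f i) x = ∑ i ∈ s, f i x := by
  have := map_sum (SchwartzMap.coeHom 𝓢(EuclideanSpace ℝ (Fin d), ℝ) (EuclideanSpace ℝ (Fin d)) ℝ) f s
  change ⇑(∑ x ∈ s, f x) = ∑ x ∈ s, ⇑(f x) at this
  rw [this, Finset.sum_apply]

/-- (eq:L2_h_H) of Lemma 5.4: for a Schwartz function `h` with `|∇h| ≤ 1`, the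
Frobenius L² norm of the Hessian is controlled by `2√2` times the L² norm of the
mean curvature `H = (1+|∇h|²)^{-1/2}(Δh − ⟨∇²h·∇h,∇h⟩/(1+|∇h|²))` of the graph. -/
theorem stmt5 (d : ℕ) (hd : 1 ≤ d) (h : SchwartzMap (EuclideanSpace ℝ (Fin d)) ℝ)
    (hgrad : ∀ x, ‖fderiv ℝ (fun y => h y) x‖ ≤ 1) :
    Real.sqrt (∫ x, ∑ i, ∑ j, (hessEntry d (fun y => h y) x i j) ^ 2) ≤
      2 * Real.sqrt 2 * Real.sqrt (∫ x,
        ((1 + ‖fderiv ℝ (fun y => h y) x‖ ^ 2) ^ (-(1:ℝ)/2) *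
          ((∑ i, hessEntry d (fun y => h y) x i i) -
            (∑ i, ∑ j, hessEntry d (fun y => h y) x i j *
                fderiv ℝ (fun y => h y) x (EuclideanSpace.single i (1:ℝ)) *
                fderiv ℝ (fun y => h y) x (EuclideanSpace.single j (1:ℝ))) /
              (1 + ‖fderiv ℝ (fun y => h y) x‖ ^ 2))) ^ 2) := by
  simp only [hessEntry_eq, ← Dir_apply]
  apply sqrt_chain
  have hFint : Integrable (fun x => ∑ i, ∑ j, (Dir d j (Dir d i h) x)^2) volume :=
    integrable_finset_sum _ fun i _ => integrable_finset_sum _ fun j _ => sch_sq_integrable _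
  have hT2int : Integrable (fun x => (∑ i, Dir d i (Dir d i h) x)^2) volume := by
    have := sch_sq_integrable (∑ i, Dir d i (Dir d i h))
    simpa only [coe_sum] using this
  have hs : ∀ x : EuclideanSpace ℝ (Fin d),
      ‖fderiv ℝ (fun y => h y) x‖^2 = ∑ i, (Dir d i h x)^2 := by
    intro x
    rw [norm_clm_sq]
    exact Finset.sum_congr rfl fun i _ => by rw [Dir_apply]
  have hCS : ∀ x, (∑ i, ∑ j, Dir d j (Dir d i h) x * Dir d i h x * Dir d j h x)^2
      ≤ (∑ i, ∑ j, (Dir d j (Dir d i h) x)^2) * (‖fderiv ℝ (fun y => h y) x‖^2)^2 := by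
    intro x
    rw [hs]
    have h1 : (∑ i, ∑ j, Dir d j (Dir d i h) x * Dir d i h x * Dir d j h x)
        = ∑ p : Fin d × Fin d, Dir d p.2 (Dir d p.1 h) x * (Dir d p.1 h x * Dir d p.2 h x) := by
      rw [Fintype.sum_prod_type]; simp_rw [mul_assoc]
    have h2 : (∑ i, ∑ j, (Dir d j (Dir d i h) x)^2)
        = ∑ p : Fin d × Fin d, (Dir d p.2 (Dir d p.1 h) x)^2 := by
      rw [Fintype.sum_prod_type]
    have h3 : ((∑ i, (Dir d i h x)^2))^2
        = ∑ p : Fin d × Fin d, (Dir d p.1 h x * Dir d p.2 h x)^2 := by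
      rw [Fintype.sum_prod_type, pow_two, Finset.sum_mul_sum]
      simp_rw [mul_pow]
    rw [h1, h2, h3]
    exact Finset.sum_mul_sq_le_sq_mul_sq _ _ _
  have hs0 : ∀ x, (0:ℝ) ≤ ‖fderiv ℝ (fun y => h y) x‖^2 := fun x => by positivity
  have hs1 : ∀ x, ‖fderiv ℝ (fun y => h y) x‖^2 ≤ 1 := fun x =>
    pow_le_one₀ (norm_nonneg _) (hgrad x)
  have hFnonneg : ∀ x, (0:ℝ) ≤ ∑ i, ∑ j, (Dir d j (Dir d i h) x)^2 := fun x => by positivity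
  have hfc : Continuous (fun x => fderiv ℝ (fun y => h y) x) :=
    (h.smooth ⊤).continuous_fderiv (by simp)
  have hqc : Continuous (fun x => 1 + ‖fderiv ℝ (fun y => h y) x‖^2) :=
    continuous_const.add ((hfc.norm).pow 2)
  have hqne : ∀ x, 1 + ‖fderiv ℝ (fun y => h y) x‖^2 ≠ 0 := fun x => by positivity
  have hHcont : Continuous (fun x =>
      (1 + ‖fderiv ℝ (fun y => h y) x‖ ^ 2) ^ (-(1:ℝ)/2) *
        ((∑ i, Dir d i (Dir d i h) x) -
          (∑ i, ∑ j, Dir d j (Dir d i h) x * Dir d i h x * Dir d j h x) /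
            (1 + ‖fderiv ℝ (fun y => h y) x‖ ^ 2))) := by
    apply Continuous.mul
    · exact hqc.rpow_const (fun x => Or.inl (hqne x))
    · apply Continuous.sub
      · exact continuous_finset_sum _ fun i _ => (Dir d i (Dir d i h)).continuous
      · exact Continuous.div
          (continuous_finset_sum _ fun i _ => continuous_finset_sum _ fun j _ =>
            ((Dir d j (Dir d i h)).continuous.mul (Dir d i h).continuous).mul
              (Dir d j h).continuous) hqc hqne
  have hH2int : Integrable (fun x =>
      ((1 + ‖fderiv ℝ (fun y => h y) x‖ ^ 2) ^ (-(1:ℝ)/2) *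
        ((∑ i, Dir d i (Dir d i h) x) -
          (∑ i, ∑ j, Dir d j (Dir d i h) x * Dir d i h x * Dir d j h x) /
            (1 + ‖fderiv ℝ (fun y => h y) x‖ ^ 2)))^2) volume := by
    apply Integrable.mono' ((hT2int.const_mul 2).add (hFint.div_const 2))
      (hHcont.pow 2).aestronglyMeasurable
    filter_upwards with x
    rw [Real.norm_eq_abs, abs_of_nonneg (sq_nonneg _)]
    exact ptwise_H _ _ _ _ _ rfl (hs0 x) (hs1 x) (hCS x) (hFnonneg x)
  have h1 := sum_int h
  have h2 : ∫ x, (∑ i, Dir d i (Dir d i h) x)^2 ≤ ∫ x,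
      (4 * ((1 + ‖fderiv ℝ (fun y => h y) x‖ ^ 2) ^ (-(1:ℝ)/2) *
        ((∑ i, Dir d i (Dir d i h) x) -
          (∑ i, ∑ j, Dir d j (Dir d i h) x * Dir d i h x * Dir d j h x) /
            (1 + ‖fderiv ℝ (fun y => h y) x‖ ^ 2)))^2
        + (∑ i, ∑ j, (Dir d j (Dir d i h) x)^2)/2) :=
    integral_mono hT2int ((hH2int.const_mul 4).add (hFint.div_const 2))
      (fun x => ptwise_main _ _ _ _ _ rfl (hs0 x) (hs1 x) (hCS x) (hFnonneg x))
  have h3 : ∫ x, (4 * ((1 + ‖fderiv ℝ (fun y => h y) x‖ ^ 2) ^ (-(1:ℝ)/2) *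
        ((∑ i, Dir d i (Dir d i h) x) -
          (∑ i, ∑ j, Dir d j (Dir d i h) x * Dir d i h x * Dir d j h x) /
            (1 + ‖fderiv ℝ (fun y => h y) x‖ ^ 2)))^2
        + (∑ i, ∑ j, (Dir d j (Dir d i h) x)^2)/2)
      = 4 * (∫ x, ((1 + ‖fderiv ℝ (fun y => h y) x‖ ^ 2) ^ (-(1:ℝ)/2) *
        ((∑ i, Dir d i (Dir d i h) x) -
          (∑ i, ∑ j, Dir d j (Dir d i h) x * Dir d i h x * Dir d j h x) /
            (1 + ‖fderiv ℝ (fun y => h y) x‖ ^ 2)))^2)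
        + (∫ x, ∑ i, ∑ j, (Dir d j (Dir d i h) x)^2)/2 := by
    rw [integral_add (hH2int.const_mul 4) (hFint.div_const 2), integral_const_mul,
      integral_div]
  have h4 : (0:ℝ) ≤ ∫ x, ((1 + ‖fderiv ℝ (fun y => h y) x‖ ^ 2) ^ (-(1:ℝ)/2) *
        ((∑ i, Dir d i (Dir d i h) x) -
          (∑ i, ∑ j, Dir d j (Dir d i h) x * Dir d i h x * Dir d j h x) /
            (1 + ‖fderiv ℝ (fun y => h y) x‖ ^ 2)))^2 :=
    integral_nonneg fun x => sq_nonneg _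
  linarith
end

section
/- Let d ≥ 1 be an integer, A, B ≥ 0, and let w : ℝ^d → ℝ be a measurable function with ∫_{ℝ^d} |w| dx ≤ A and |w(x)| ≤ B·‖x‖^{−(d+1)} for every x with ‖x‖ ≥ 1. Let P(x,z) = c_d·z/(‖x‖² + z²)^{(d+1)/2} be the Poisson kernel of the upper half-space ℝ^d × (0,∞), where c_d = Γ((d+1)/2)/π^{(d+1)/2} is normalized so that ∫_{ℝ^d} P(x,z) dx = 1 for every z > 0, and define the harmonic extension w̄(x,z) = ∫_{ℝ^d} P(x−y, z)·w(y) dy for z > 0. Then there exists a constant C, depending only on d, such that |w̄(x,z)| ≤ C·(A + B)·(‖x‖² + z²)^{−d/2} for every (x,z) ∈ ℝ^d × (0,∞) with ‖x‖² + z² ≥ 4. -/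
open MeasureTheory Set

/-- The Poisson kernel of the upper half-space `ℝ^d × (0,∞)`, normalized so that
`∫_{ℝ^d} P(x,z) dx = 1` for every `z > 0`. -/
noncomputable def poissonK (d : ℕ) (x : EuclideanSpace ℝ (Fin d)) (z : ℝ) : ℝ :=
  (Real.Gamma (((d:ℝ) + 1) / 2) / Real.pi ^ (((d:ℝ) + 1) / 2)) * z /
    (‖x‖ ^ 2 + z ^ 2) ^ (((d:ℝ) + 1) / 2)

namespace Stmt18Aux

lemma gamma_pi_pos (d : ℕ) :
    0 < Real.Gamma (((d:ℝ) + 1) / 2) / Real.pi ^ (((d:ℝ) + 1) / 2) :=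
  div_pos (Real.Gamma_pos_of_pos (by positivity)) (Real.rpow_pos_of_pos Real.pi_pos _)

lemma poissonK_nonneg (d : ℕ) (u : EuclideanSpace ℝ (Fin d)) {z : ℝ} (hz : 0 < z) :
    0 ≤ poissonK d u z := by
  have := (gamma_pi_pos d).le
  unfold poissonK
  positivity

lemma g_integrable (d : ℕ) :
    Integrable (fun v : EuclideanSpace ℝ (Fin d) =>
      ((1:ℝ) + ‖v‖ ^ 2) ^ (-((d:ℝ) + 1) / 2)) := by
  apply integrable_rpow_neg_one_add_norm_sq
  rw [finrank_euclideanSpace_fin]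
  linarith

lemma zsq_rpow (d : ℕ) {z : ℝ} (hz : 0 < z) :
    ((z ^ 2 : ℝ)) ^ (((d:ℝ) + 1) / 2) = z ^ (d + 1) := by
  rw [← Real.rpow_natCast z 2, ← Real.rpow_mul hz.le, ← Real.rpow_natCast z (d + 1)]
  push_cast
  ring_nf

lemma poissonK_eq (d : ℕ) {z : ℝ} (hz : 0 < z) (u : EuclideanSpace ℝ (Fin d)) :
    poissonK d u z = (Real.Gamma (((d:ℝ) + 1) / 2) / Real.pi ^ (((d:ℝ) + 1) / 2)) * (z ^ d)⁻¹ *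
      ((1:ℝ) + ‖z⁻¹ • u‖ ^ 2) ^ (-((d:ℝ) + 1) / 2) := by
  have hz2 : (0:ℝ) < z ^ 2 := by positivity
  have h1 : ‖z⁻¹ • u‖ ^ 2 = ‖u‖ ^ 2 / z ^ 2 := by
    rw [norm_smul, norm_inv, Real.norm_eq_abs, abs_of_pos hz, mul_pow]
    field_simp
  have h2 : (1:ℝ) + ‖u‖ ^ 2 / z ^ 2 = (‖u‖ ^ 2 + z ^ 2) / z ^ 2 := by
    field_simp; ring
  have hden : (0:ℝ) < ‖u‖ ^ 2 + z ^ 2 := by positivity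
  rw [poissonK, h1, h2, neg_div, Real.rpow_neg (by positivity),
    Real.div_rpow (by positivity : (0:ℝ) ≤ ‖u‖ ^ 2 + z ^ 2) hz2.le, zsq_rpow d hz]
  have hp : (0:ℝ) < (‖u‖ ^ 2 + z ^ 2) ^ (((d:ℝ) + 1) / 2) := Real.rpow_pos_of_pos hden _
  have hzd : (z:ℝ) ^ d ≠ 0 := by positivity
  have hzd1 : (z:ℝ) ^ (d + 1) ≠ 0 := by positivity
  field_simp
  ring

lemma integral_poissonK (d : ℕ) {z : ℝ} (hz : 0 < z) (x : EuclideanSpace ℝ (Fin d)) :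
    Integrable (fun y => poissonK d (x - y) z) ∧
    (∫ y, poissonK d (x - y) z) =
      (Real.Gamma (((d:ℝ) + 1) / 2) / Real.pi ^ (((d:ℝ) + 1) / 2)) *
      ∫ v : EuclideanSpace ℝ (Fin d), ((1:ℝ) + ‖v‖ ^ 2) ^ (-((d:ℝ) + 1) / 2) := by
  set c : ℝ := Real.Gamma (((d:ℝ) + 1) / 2) / Real.pi ^ (((d:ℝ) + 1) / 2) with hc
  have hfun : (fun u : EuclideanSpace ℝ (Fin d) => poissonK d u z) =
      fun u => c * (z ^ d)⁻¹ * ((1:ℝ) + ‖z⁻¹ • u‖ ^ 2) ^ (-((d:ℝ) + 1) / 2) :=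
    funext (poissonK_eq d hz)
  have hIg : Integrable (fun u : EuclideanSpace ℝ (Fin d) =>
      ((1:ℝ) + ‖z⁻¹ • u‖ ^ 2) ^ (-((d:ℝ) + 1) / 2)) :=
    (g_integrable d).comp_smul (inv_ne_zero hz.ne')
  have hI : Integrable (fun u : EuclideanSpace ℝ (Fin d) => poissonK d u z) := by
    rw [hfun]; exact hIg.const_mul _
  refine ⟨hI.comp_sub_left x, ?_⟩
  rw [integral_sub_left_eq_self (fun u => poissonK d u z) volume x, hfun]
  rw [MeasureTheory.integral_const_mul]
  have := MeasureTheory.Measure.integral_comp_smul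
    (volume : Measure (EuclideanSpace ℝ (Fin d)))
    (fun v : EuclideanSpace ℝ (Fin d) => ((1:ℝ) + ‖v‖ ^ 2) ^ (-((d:ℝ) + 1) / 2)) z⁻¹
  rw [finrank_euclideanSpace_fin] at this
  rw [this, smul_eq_mul]
  have hzd : (0:ℝ) < z ^ d := by positivity
  rw [abs_of_nonneg (by positivity : (0:ℝ) ≤ ((z⁻¹) ^ d)⁻¹), inv_pow, inv_inv]
  field_simp

end Stmt18Aux

open Stmt18Aux

set_option maxHeartbeats 2000000 in
/-- Lemma A.1 (analytic core): if `w` has `∫|w| ≤ A` and pointwise decay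
`|w(x)| ≤ B‖x‖^{-(d+1)}` for `‖x‖ ≥ 1`, then its Poisson extension
`w̄(x,z) = ∫ P(x−y,z) w(y) dy` satisfies
`|w̄(x,z)| ≤ C (A+B) (‖x‖²+z²)^{-d/2}` whenever `‖x‖²+z² ≥ 4`. -/
theorem stmt18 (d : ℕ) (hd : 1 ≤ d) :
    ∃ C : ℝ, 0 < C ∧ ∀ (A B : ℝ), 0 ≤ A → 0 ≤ B →
      ∀ w : EuclideanSpace ℝ (Fin d) → ℝ, Measurable w →
      (∫⁻ x, ENNReal.ofReal |w x| ≤ ENNReal.ofReal A) →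
      (∀ x, 1 ≤ ‖x‖ → |w x| ≤ B * ‖x‖ ^ (-((d:ℝ) + 1))) →
      ∀ (x : EuclideanSpace ℝ (Fin d)) (z : ℝ), 0 < z → 4 ≤ ‖x‖ ^ 2 + z ^ 2 →
        |∫ y, poissonK d (x - y) z * w y| ≤
          C * (A + B) * (‖x‖ ^ 2 + z ^ 2) ^ (-(d:ℝ)/2) := by
  classical
  set c : ℝ := Real.Gamma (((d:ℝ) + 1) / 2) / Real.pi ^ (((d:ℝ) + 1) / 2) with hcdef
  have hc : 0 < c := gamma_pi_pos d
  set J : ℝ := ∫ v : EuclideanSpace ℝ (Fin d), ((1:ℝ) + ‖v‖ ^ 2) ^ (-((d:ℝ) + 1) / 2) with hJdef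
  have hJ : 0 ≤ J :=
    integral_nonneg fun v => Real.rpow_nonneg (by positivity) _
  set p : ℝ := ((d:ℝ) + 1) / 2 with hpdef
  have hp : 0 < p := by positivity
  refine ⟨c * 16 ^ p + 2 ^ ((d:ℝ) + 1) * (c * J) + 1, by positivity, ?_⟩
  intro A B hA hB w hw hwL1 hwdecay x z hz hS4
  set S : ℝ := ‖x‖ ^ 2 + z ^ 2 with hSdef
  have hS0 : (0:ℝ) < S := by positivity
  have hS1 : (1:ℝ) ≤ S := by linarith
  -- integrability of w
  have hw_int : Integrable w := by
    refine ⟨hw.aestronglyMeasurable, ?_⟩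
    rw [HasFiniteIntegral]
    have heq : ∀ a, (‖w a‖ₑ : ENNReal) = ENNReal.ofReal |w a| := fun a => by
      rw [← Real.norm_eq_abs, ofReal_norm_eq_enorm]
    simp_rw [heq]
    exact lt_of_le_of_lt hwL1 ENNReal.ofReal_lt_top
  have hL1 : ∫ y, |w y| ≤ A := by
    rw [integral_eq_lintegral_of_nonneg_ae (ae_of_all _ fun y => abs_nonneg (w y))
      (hw.abs.aestronglyMeasurable)]
    calc (∫⁻ y, ENNReal.ofReal |w y|).toReal ≤ (ENNReal.ofReal A).toReal :=
          ENNReal.toReal_mono ENNReal.ofReal_ne_top hwL1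
      _ = A := ENNReal.toReal_ofReal hA
  obtain ⟨hPint, hPval⟩ := integral_poissonK d hz x
  have hP0 : ∀ y, 0 ≤ poissonK d (x - y) z := fun y => poissonK_nonneg d (x - y) hz
  have hSd : 0 ≤ S ^ (-(d:ℝ)/2) := Real.rpow_nonneg hS0.le _
  -- z ≤ sqrt S
  have hzS : z ≤ Real.sqrt S := by
    rw [show S = ‖x‖ ^ 2 + z ^ 2 from rfl]
    refine le_trans ?_ (Real.sqrt_le_sqrt (by nlinarith : z ^ 2 ≤ ‖x‖ ^ 2 + z ^ 2))
    rw [Real.sqrt_sq hz.le]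
  have hsqrtS : Real.sqrt S * (S ^ p)⁻¹ = S ^ (-(d:ℝ)/2) := by
    rw [Real.sqrt_eq_rpow, ← Real.rpow_neg hS0.le, ← Real.rpow_add hS0]
    congr 1
    rw [hpdef]; ring
  -- the dominating function
  set h : EuclideanSpace ℝ (Fin d) → ℝ := fun y =>
    c * 16 ^ p * S ^ (-(d:ℝ)/2) * |w y| +
      B * 2 ^ ((d:ℝ) + 1) * S ^ (-(d:ℝ)/2) * poissonK d (x - y) z with hhdef
  have hpt : ∀ y, |poissonK d (x - y) z * w y| ≤ h y := by
    intro y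
    rw [abs_mul, abs_of_nonneg (hP0 y)]
    rcases le_or_gt (‖y‖ ^ 2) (S / 4) with hy | hy
    · -- near-origin y: use the kernel bound
      have hdist : S / 16 ≤ ‖x - y‖ ^ 2 + z ^ 2 := by
        rcases le_or_gt (9 * S / 16) (‖x‖ ^ 2) with hxa | hxa
        · have hab : ‖y‖ ≤ ‖x‖ := by nlinarith [norm_nonneg x, norm_nonneg y]
          have ht : ‖x‖ - ‖y‖ ≤ ‖x - y‖ := norm_sub_norm_le x y
          have ht2 : (‖x‖ - ‖y‖) ^ 2 ≤ ‖x - y‖ ^ 2 := by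
            nlinarith [norm_nonneg (x - y)]
          nlinarith [sq_nonneg (2 * ‖x‖ - 3 * ‖y‖)]
        · nlinarith [sq_nonneg ‖x - y‖]
      have hden : (0:ℝ) < ‖x - y‖ ^ 2 + z ^ 2 := by positivity
      have hPle : poissonK d (x - y) z ≤ c * 16 ^ p * S ^ (-(d:ℝ)/2) := by
        have h1 : poissonK d (x - y) z ≤ c * z / (S / 16) ^ p := by
          rw [poissonK]
          have h16 : (0:ℝ) < (S / 16) ^ p := Real.rpow_pos_of_pos (by linarith) _
          have hmono : (S / 16) ^ p ≤ (‖x - y‖ ^ 2 + z ^ 2) ^ p :=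
            Real.rpow_le_rpow (by linarith) hdist hp.le
          exact div_le_div_of_nonneg_left (by positivity) h16 hmono
        have h2 : c * z / (S / 16) ^ p = c * 16 ^ p * (z * (S ^ p)⁻¹) := by
          rw [Real.div_rpow hS0.le (by norm_num : (0:ℝ) ≤ 16)]
          have h16p : (0:ℝ) < (16:ℝ) ^ p := Real.rpow_pos_of_pos (by norm_num) _
          have hSp : (0:ℝ) < S ^ p := Real.rpow_pos_of_pos hS0 _
          field_simp
        have h3 : z * (S ^ p)⁻¹ ≤ Real.sqrt S * (S ^ p)⁻¹ := by
          have hSp : (0:ℝ) < S ^ p := Real.rpow_pos_of_pos hS0 _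
          exact mul_le_mul_of_nonneg_right hzS (by positivity)
        calc poissonK d (x - y) z ≤ c * 16 ^ p * (z * (S ^ p)⁻¹) := by rw [← h2]; exact h1
          _ ≤ c * 16 ^ p * (Real.sqrt S * (S ^ p)⁻¹) := by
              apply mul_le_mul_of_nonneg_left h3
              positivity
          _ = c * 16 ^ p * S ^ (-(d:ℝ)/2) := by rw [hsqrtS]
      have hterm1 : poissonK d (x - y) z * |w y| ≤ c * 16 ^ p * S ^ (-(d:ℝ)/2) * |w y| :=
        mul_le_mul_of_nonneg_right hPle (abs_nonneg _)
      have hterm2 : 0 ≤ B * 2 ^ ((d:ℝ) + 1) * S ^ (-(d:ℝ)/2) * poissonK d (x - y) z := by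
        have := hP0 y
        positivity
      rw [hhdef]; dsimp only
      linarith
    · -- far y: use the pointwise decay of w
      have hy1 : (1:ℝ) ≤ ‖y‖ := by nlinarith [norm_nonneg y]
      have hy0 : (0:ℝ) < ‖y‖ := by linarith
      have hySd : Real.sqrt S / 2 ≤ ‖y‖ := by
        have h1 : Real.sqrt (S / 4) ≤ Real.sqrt (‖y‖ ^ 2) := Real.sqrt_le_sqrt (by linarith)
        rw [Real.sqrt_sq (norm_nonneg y)] at h1
        have h2 : Real.sqrt (S / 4) = Real.sqrt S / 2 := by
          rw [show S / 4 = S * (1/2) ^ 2 by ring, Real.sqrt_mul hS0.le,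
            Real.sqrt_sq (by norm_num : (0:ℝ) ≤ 1/2)]
          ring
        rw [← h2]; exact h1
      have hsqrtS0 : (0:ℝ) < Real.sqrt S := Real.sqrt_pos.mpr hS0
      have hyq : ‖y‖ ^ (-((d:ℝ) + 1)) ≤ (Real.sqrt S / 2) ^ (-((d:ℝ) + 1)) :=
        Real.rpow_le_rpow_of_nonpos (by positivity) hySd (neg_nonpos.mpr (by positivity))
      have hcalc : (Real.sqrt S / 2) ^ (-((d:ℝ) + 1)) =
          2 ^ ((d:ℝ) + 1) * S ^ (-((d:ℝ) + 1) / 2) := by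
        have e1 : (Real.sqrt S) ^ (-((d:ℝ) + 1)) = S ^ (-((d:ℝ) + 1) / 2) := by
          rw [Real.sqrt_eq_rpow, ← Real.rpow_mul hS0.le]
          congr 1
          ring
        have e2 : (2:ℝ) ^ (-((d:ℝ) + 1)) = ((2:ℝ) ^ ((d:ℝ) + 1))⁻¹ :=
          Real.rpow_neg (by norm_num) _
        rw [Real.div_rpow (Real.sqrt_nonneg S) (by norm_num : (0:ℝ) ≤ 2), e1, e2,
          div_eq_mul_inv, inv_inv]
        ring
      have hexp : S ^ (-((d:ℝ) + 1) / 2) ≤ S ^ (-(d:ℝ)/2) :=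
        Real.rpow_le_rpow_of_exponent_le hS1 (by linarith)
      have hwb : |w y| ≤ B * 2 ^ ((d:ℝ) + 1) * S ^ (-(d:ℝ)/2) := by
        have h2pos : (0:ℝ) ≤ (2:ℝ) ^ ((d:ℝ) + 1) := by positivity
        calc |w y| ≤ B * ‖y‖ ^ (-((d:ℝ) + 1)) := hwdecay y hy1
          _ ≤ B * (2 ^ ((d:ℝ) + 1) * S ^ (-((d:ℝ) + 1) / 2)) := by
              rw [← hcalc]; exact mul_le_mul_of_nonneg_left hyq hB
          _ ≤ B * (2 ^ ((d:ℝ) + 1) * S ^ (-(d:ℝ)/2)) := by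
              apply mul_le_mul_of_nonneg_left _ hB
              exact mul_le_mul_of_nonneg_left hexp h2pos
          _ = B * 2 ^ ((d:ℝ) + 1) * S ^ (-(d:ℝ)/2) := by ring
      have hterm2 : poissonK d (x - y) z * |w y| ≤
          B * 2 ^ ((d:ℝ) + 1) * S ^ (-(d:ℝ)/2) * poissonK d (x - y) z := by
        calc poissonK d (x - y) z * |w y| ≤
            poissonK d (x - y) z * (B * 2 ^ ((d:ℝ) + 1) * S ^ (-(d:ℝ)/2)) :=
              mul_le_mul_of_nonneg_left hwb (hP0 y)
          _ = B * 2 ^ ((d:ℝ) + 1) * S ^ (-(d:ℝ)/2) * poissonK d (x - y) z := by ring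
      have hterm1 : 0 ≤ c * 16 ^ p * S ^ (-(d:ℝ)/2) * |w y| := by positivity
      rw [hhdef]; dsimp only
      linarith
  -- integrability of the dominating function and of the integrand
  have hterm1_int : Integrable (fun y => c * 16 ^ p * S ^ (-(d:ℝ)/2) * |w y|) :=
    hw_int.abs.const_mul _
  have hterm2_int : Integrable
      (fun y => B * 2 ^ ((d:ℝ) + 1) * S ^ (-(d:ℝ)/2) * poissonK d (x - y) z) :=
    hPint.const_mul _
  have hh_int : Integrable h := hterm1_int.add hterm2_int
  have hf_meas : AEStronglyMeasurable (fun y => poissonK d (x - y) z * w y) volume :=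
    hPint.aestronglyMeasurable.mul hw.aestronglyMeasurable
  have hf_int : Integrable (fun y => poissonK d (x - y) z * w y) :=
    hh_int.mono' hf_meas (ae_of_all _ fun y => by rw [Real.norm_eq_abs]; exact hpt y)
  rw [← hcdef, ← hJdef] at hPval
  calc |∫ y, poissonK d (x - y) z * w y| ≤ ∫ y, |poissonK d (x - y) z * w y| := by
        simpa only [Real.norm_eq_abs] using
          norm_integral_le_integral_norm (μ := volume) (fun y => poissonK d (x - y) z * w y)
    _ ≤ ∫ y, h y := integral_mono hf_int.abs hh_int hpt
    _ = c * 16 ^ p * S ^ (-(d:ℝ)/2) * (∫ y, |w y|) +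
        B * 2 ^ ((d:ℝ) + 1) * S ^ (-(d:ℝ)/2) * (∫ y, poissonK d (x - y) z) := by
        rw [hhdef]
        rw [integral_add hterm1_int hterm2_int, MeasureTheory.integral_const_mul,
          MeasureTheory.integral_const_mul]
    _ ≤ c * 16 ^ p * S ^ (-(d:ℝ)/2) * A +
        B * 2 ^ ((d:ℝ) + 1) * S ^ (-(d:ℝ)/2) * (c * J) := by
        rw [hPval]
        have : c * 16 ^ p * S ^ (-(d:ℝ)/2) * (∫ y, |w y|) ≤
            c * 16 ^ p * S ^ (-(d:ℝ)/2) * A :=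
          mul_le_mul_of_nonneg_left hL1 (by positivity)
        linarith
    _ ≤ (c * 16 ^ p + 2 ^ ((d:ℝ) + 1) * (c * J) + 1) * (A + B) * S ^ (-(d:ℝ)/2) := by
        have h16 : (0:ℝ) ≤ (16:ℝ) ^ p := by positivity
        have h2p : (0:ℝ) ≤ (2:ℝ) ^ ((d:ℝ) + 1) := by positivity
        have hcJ : (0:ℝ) ≤ c * J := mul_nonneg hc.le hJ
        nlinarith [mul_nonneg (mul_nonneg (mul_nonneg hc.le h16) hSd) hB,
          mul_nonneg (mul_nonneg (mul_nonneg h2p hcJ) hSd) hA,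
          mul_nonneg hA hSd, mul_nonneg hB hSd,
          mul_nonneg (mul_nonneg hA hSd) hB]
end
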